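/- Let 𝕍 = V ⊕ V* = E ⊕ F be a Lagrangian splitting with bivector π. For ε ∈ ∧²E, let F_ε = A^{-ε}(F) be the image of F under the orthogonal transformation A^{-ε} fixing E pointwise (generated by ε via the Clifford/Poisson identification ∧²𝕍 ≅ 𝔬(𝕍)). Then F_ε is a Lagrangian complement to E, and the bivector π_ε of the splitting E ⊕ F_ε is π_ε = π + pr_V(ε), where pr_V: ∧E → ∧V is the algebra morphism extending the projection E → V. -/
import Mathlib


set_option synthInstance.maxHeartbeats 1000000
set_option maxHeartbeats 1000000

open ExteriorAlgebra CliffordAlgebra Module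

/-- The pairing bilinear form on `𝕍 = V ⊕ V*`. -/
noncomputable def vPairing (K V : Type*) [Field K] [AddCommGroup V] [Module K V] :
    LinearMap.BilinForm K (V × Module.Dual K V) :=
  LinearMap.mk₂ K (fun w u => w.2 u.1 + u.2 w.1)
    (fun w w' u => by simp; ring)
    (fun c w u => by simp; ring)
    (fun w u u' => by simp; ring)
    (fun c w u => by simp; ring)

/-- The algebra morphism `pr_V : ∧ 𝕍 → ∧ V` extending the projection `𝕍 → V`. -/
noncomputable def prExt (K V : Type*) [Field K] [AddCommGroup V] [Module K V] :
    ExteriorAlgebra K (V × Module.Dual K V) →ₐ[K] ExteriorAlgebra K V :=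
  ExteriorAlgebra.lift K
    ⟨(ExteriorAlgebra.ι K).comp (LinearMap.fst K V (Module.Dual K V)),
      fun _ => ExteriorAlgebra.ι_sq_zero _⟩

section Aux

variable {K V : Type*} [Field K] [AddCommGroup V] [Module K V]

lemma vPairing_apply (w u : V × Module.Dual K V) :
    vPairing K V w u = w.2 u.1 + u.2 w.1 := rfl

lemma vPairing_symm (w u : V × Module.Dual K V) :
    vPairing K V w u = vPairing K V u w := by
  simp [vPairing_apply, add_comm]

lemma vPairing_zero_fst (α : Module.Dual K V) (u : V × Module.Dual K V) :
    vPairing K V ((0 : V), α) u = α u.1 := by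
  simp [vPairing_apply]

lemma prExt_ι (w : V × Module.Dual K V) :
    prExt K V (ExteriorAlgebra.ι K w) = ExteriorAlgebra.ι K w.1 := by
  simp [prExt, ExteriorAlgebra.lift_ι_apply]

lemma contract_ι_mul_ι {M : Type*} [AddCommGroup M] [Module K M]
    (d : Module.Dual K M) (x y : M) :
    CliffordAlgebra.contractLeft d (ExteriorAlgebra.ι K x * ExteriorAlgebra.ι K y) =
      d x • ExteriorAlgebra.ι K y - d y • ExteriorAlgebra.ι K x := by
  rw [CliffordAlgebra.contractLeft_ι_mul, CliffordAlgebra.contractLeft_ι,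
    ← Algebra.commutes, ← Algebra.smul_def]

/-- Euler identity: a degree-2 element all of whose contractions vanish is zero. -/
lemma euler_two [CharZero K] [FiniteDimensional K V] {σ : ExteriorAlgebra K V}
    (hσ : σ ∈ (⋀[K]^2 V))
    (h : ∀ α : Module.Dual K V, CliffordAlgebra.contractLeft α σ = 0) : σ = 0 := by
  classical
  let b := Module.finBasis K V
  have key : ∀ x ∈ (⋀[K]^2 V),
      (2 : K) • x =
        ∑ i, ExteriorAlgebra.ι K (b i) * CliffordAlgebra.contractLeft (b.coord i) x := by
    intro x hx
    have hx' : x ∈ LinearMap.range (ExteriorAlgebra.ι K (M := V)) *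
        LinearMap.range (ExteriorAlgebra.ι K (M := V)) := by
      rw [← pow_two]; exact hx
    refine Submodule.mul_induction_on hx' ?_ ?_
    · rintro m ⟨u, rfl⟩ n ⟨v, rfl⟩
      have step : ∀ i : Fin (Module.finrank K V),
          ExteriorAlgebra.ι K (b i) *
            CliffordAlgebra.contractLeft (b.coord i)
              (ExteriorAlgebra.ι K u * ExteriorAlgebra.ι K v)
          = b.coord i u • (ExteriorAlgebra.ι K (b i) * ExteriorAlgebra.ι K v)
            - b.coord i v • (ExteriorAlgebra.ι K (b i) * ExteriorAlgebra.ι K u) := by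
        intro i
        rw [contract_ι_mul_ι, mul_sub, mul_smul_comm, mul_smul_comm]
      rw [Finset.sum_congr rfl fun i _ => step i, Finset.sum_sub_distrib]
      have hsum : ∀ w z : V,
          (∑ i, b.coord i w • (ExteriorAlgebra.ι K (b i) * ExteriorAlgebra.ι K z))
            = ExteriorAlgebra.ι K w * ExteriorAlgebra.ι K z := by
        intro w z
        have h1 : (∑ i, b.coord i w • (ExteriorAlgebra.ι K (b i) * ExteriorAlgebra.ι K z))
            = (∑ i, b.coord i w • ExteriorAlgebra.ι K (b i)) * ExteriorAlgebra.ι K z := by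
          rw [Finset.sum_mul]
          exact Finset.sum_congr rfl fun i _ => (smul_mul_assoc _ _ _).symm
        rw [h1]
        congr 1
        have h2 : (∑ i, b.coord i w • ExteriorAlgebra.ι K (b i))
            = ExteriorAlgebra.ι K (∑ i, b.coord i w • b i) := by
          rw [map_sum]
          exact Finset.sum_congr rfl fun i _ => (map_smul _ _ _).symm
        rw [h2]
        congr 1
        simpa [Basis.coord_apply] using b.sum_repr w
      rw [hsum u v, hsum v u]
      have hswap : ExteriorAlgebra.ι K v * ExteriorAlgebra.ι K u
          = -(ExteriorAlgebra.ι K u * ExteriorAlgebra.ι K v) :=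
        eq_neg_of_add_eq_zero_left (ExteriorAlgebra.ι_add_mul_swap v u)
      rw [hswap, sub_neg_eq_add, two_smul]
    · intro a c ha hc
      rw [smul_add, ha, hc, ← Finset.sum_add_distrib]
      exact Finset.sum_congr rfl fun i _ => by rw [map_add, mul_add]
  have h2 : (2 : K) • σ = 0 := by
    rw [key σ hσ]
    simp [h]
  rcases smul_eq_zero.mp h2 with h' | h'
  · exact absurd h' two_ne_zero
  · exact h'

end Aux

/-- let `𝕍 = E ⊕ F` be a Lagrangian splitting with bivector `π`, and let
`ε ∈ ∧²E`. The gauge transformation `A = A^{-ε}` (so `A(w) - w = ι(w)ε`, contraction via the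
pairing form) produces `F_ε = A(F)`, a Lagrangian complement to `E`, and the bivector of the
splitting `E ⊕ F_ε` is `π_ε = π + pr_V(ε)`. -/
theorem pure_spinors_stmt14 {K V : Type*} [Field K] [CharZero K] [AddCommGroup V] [Module K V]
    [FiniteDimensional K V]
    (E F : Submodule K (V × Module.Dual K V))
    (hElag : E = (vPairing K V).orthogonal E)
    (hFlag : F = (vPairing K V).orthogonal F)
    (hcompl : IsCompl E F)
    (p : (V × Module.Dual K V) →ₗ[K] (V × Module.Dual K V))
    (hpE : ∀ w ∈ E, p w = w) (hpF : ∀ w ∈ F, p w = 0)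
    (π : ExteriorAlgebra K V) (hπdeg : π ∈ (⋀[K]^2 V))
    (hπ : ∀ α : Module.Dual K V,
      CliffordAlgebra.contractLeft α π = ExteriorAlgebra.ι K (-(p ((0 : V), α)).1))
    (ε : ExteriorAlgebra K (V × Module.Dual K V))
    (hε : ε ∈ (E.map (ExteriorAlgebra.ι K (M := V × Module.Dual K V))) ^ 2)
    (A : (V × Module.Dual K V) →ₗ[K] (V × Module.Dual K V))
    (hA : ∀ w : V × Module.Dual K V,
      ExteriorAlgebra.ι K (A w - w) = CliffordAlgebra.contractLeft (vPairing K V w) ε) :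
    (F.map A = (vPairing K V).orthogonal (F.map A)) ∧
    IsCompl E (F.map A) ∧
    (∀ pε : (V × Module.Dual K V) →ₗ[K] (V × Module.Dual K V),
      (∀ w ∈ E, pε w = w) → (∀ w ∈ F.map A, pε w = 0) →
      ∀ πε : ExteriorAlgebra K V, πε ∈ (⋀[K]^2 V) →
        (∀ α : Module.Dual K V,
          CliffordAlgebra.contractLeft α πε = ExteriorAlgebra.ι K (-(pε ((0 : V), α)).1)) →
        πε = π + prExt K V ε) := by
  classical
  have hEE : ∀ x ∈ E, ∀ y ∈ E, vPairing K V x y = 0 := by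
    intro x hx y hy
    have hy' : y ∈ (vPairing K V).orthogonal E := hElag ▸ hy
    exact (LinearMap.BilinForm.mem_orthogonal_iff.mp hy') x hx
  have hFF : ∀ x ∈ F, ∀ y ∈ F, vPairing K V x y = 0 := by
    intro x hx y hy
    have hy' : y ∈ (vPairing K V).orthogonal F := hFlag ▸ hy
    exact (LinearMap.BilinForm.mem_orthogonal_iff.mp hy') x hx
  -- contraction maps ε into ι(E)
  have hcontract_mem : ∀ γ : Module.Dual K (V × Module.Dual K V),
      CliffordAlgebra.contractLeft γ ε ∈ E.map (ExteriorAlgebra.ι K) := by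
    intro γ
    have hε' := hε
    rw [pow_two] at hε'
    refine Submodule.mul_induction_on hε' ?_ ?_
    · rintro m ⟨u, hu, rfl⟩ n ⟨v, hv, rfl⟩
      rw [contract_ι_mul_ι]
      exact sub_mem (Submodule.smul_mem _ _ ⟨v, hv, rfl⟩)
        (Submodule.smul_mem _ _ ⟨u, hu, rfl⟩)
    · intro a c ha hc
      rw [map_add]; exact add_mem ha hc
  -- A w - w ∈ E for all w
  have hN : ∀ w, A w - w ∈ E := by
    intro w
    have h1 : ExteriorAlgebra.ι K (A w - w) ∈ E.map (ExteriorAlgebra.ι K) := by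
      rw [hA w]; exact hcontract_mem _
    obtain ⟨e, he, hee⟩ := h1
    rwa [← (ExteriorAlgebra.ι_inj K _ _).mp hee]
  -- A fixes E pointwise
  have hAE : ∀ w ∈ E, A w = w := by
    intro w hw
    have hz : CliffordAlgebra.contractLeft (vPairing K V w) ε = 0 := by
      have hε' := hε
      rw [pow_two] at hε'
      refine Submodule.mul_induction_on hε' ?_ ?_
      · rintro m ⟨u, hu, rfl⟩ n ⟨v, hv, rfl⟩
        rw [contract_ι_mul_ι, hEE w hw u hu, hEE w hw v hv, zero_smul, zero_smul, sub_zero]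
      · intro a c ha hc
        rw [map_add, ha, hc, add_zero]
    have h2 := hA w
    rw [hz, ExteriorAlgebra.ι_eq_zero_iff, sub_eq_zero] at h2
    exact h2
  -- skew-symmetry of the gauge part
  have hskew : ∀ u w, vPairing K V w (A u - u) + vPairing K V u (A w - w) = 0 := by
    intro u w
    have hcomm := CliffordAlgebra.contractLeft_comm
      (d := vPairing K V w) (d' := vPairing K V u) ε
    rw [← hA u, ← hA w, CliffordAlgebra.contractLeft_ι, CliffordAlgebra.contractLeft_ι]
      at hcomm
    have h0 : algebraMap K (ExteriorAlgebra K (V × Module.Dual K V))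
        (vPairing K V w (A u - u) + vPairing K V u (A w - w)) = 0 := by
      rw [map_add, hcomm, neg_add_cancel]
    exact (ExteriorAlgebra.algebraMap_inj _ _ _).mp (by rw [h0, map_zero])
  -- IsCompl E (F.map A)
  have hdisj : Disjoint E (F.map A) := by
    rw [Submodule.disjoint_def]
    rintro x hxE ⟨f, hf, rfl⟩
    have hfE : f ∈ E := by
      have h1 : f = A f - (A f - f) := by abel
      rw [h1]
      exact sub_mem hxE (hN f)
    have hf0 : f = 0 := (Submodule.disjoint_def.mp hcompl.disjoint) f hfE hf
    rw [hf0, map_zero]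
  have hcodis : Codisjoint E (F.map A) := by
    rw [codisjoint_iff, eq_top_iff]
    intro v _
    have hv : v ∈ E ⊔ F := by rw [hcompl.sup_eq_top]; trivial
    obtain ⟨e, he, f, hf, rfl⟩ := Submodule.mem_sup.mp hv
    refine Submodule.mem_sup.mpr ⟨e - (A f - f), sub_mem he (hN f), A f, ⟨f, hf, rfl⟩, ?_⟩
    abel
  have hcompl2 : IsCompl E (F.map A) := ⟨hdisj, hcodis⟩
  -- F.map A pairs to zero with itself
  have hFAFA : ∀ x ∈ F.map A, ∀ y ∈ F.map A, vPairing K V x y = 0 := by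
    rintro _ ⟨f, hf, rfl⟩ _ ⟨f', hf', rfl⟩
    have h1 : A f = f + (A f - f) := by abel
    have h2 : A f' = f' + (A f' - f') := by abel
    have key : ∀ x y n n' : V × Module.Dual K V,
        vPairing K V (x + n) (y + n')
          = vPairing K V x y + (vPairing K V y n + vPairing K V x n')
            + vPairing K V n n' := by
      intro x y n n'
      simp [vPairing_apply]
      ring
    have expand := key f f' (A f - f) (A f' - f')
    rw [← h1, ← h2] at expand
    rw [expand, hFF f hf f' hf', hEE _ (hN f) _ (hN f'), hskew f f']
    ring
  -- F.map A is Lagrangian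
  have hlag : F.map A = (vPairing K V).orthogonal (F.map A) := by
    refine le_antisymm ?_ ?_
    · intro x hx
      rw [LinearMap.BilinForm.mem_orthogonal_iff]
      intro n hn
      exact hFAFA n hn x hx
    · intro x hx
      have hxsup : x ∈ E ⊔ F.map A := by rw [hcompl2.sup_eq_top]; trivial
      obtain ⟨e, he, y, hy, rfl⟩ := Submodule.mem_sup.mp hxsup
      have hyorth : y ∈ (vPairing K V).orthogonal (F.map A) := by
        rw [LinearMap.BilinForm.mem_orthogonal_iff]
        intro n hn
        exact hFAFA n hn y hy
      have heorth : e ∈ (vPairing K V).orthogonal (F.map A) := by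
        have h1 : e = (e + y) - y := by abel
        rw [h1]
        exact sub_mem hx hyorth
      have heF : e ∈ F := by
        rw [hFlag, LinearMap.BilinForm.mem_orthogonal_iff]
        intro f' hf'
        have h0 : vPairing K V (A f') e = 0 :=
          (LinearMap.BilinForm.mem_orthogonal_iff.mp heorth) (A f') ⟨f', hf', rfl⟩
        have h1 : A f' = f' + (A f' - f') := by abel
        rw [h1, map_add, LinearMap.add_apply, hEE _ (hN f') e he, add_zero] at h0
        exact h0
      have he0 : e = 0 := (Submodule.disjoint_def.mp hcompl.disjoint) e he heF
      rw [he0, zero_add]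
      exact hy
  refine ⟨hlag, hcompl2, ?_⟩
  -- Claim 3
  intro pε hpεE hpεF πε hπεdeg hπε
  -- prExt commutes with contraction via (0, α)
  have hL6 : ∀ α : Module.Dual K V,
      CliffordAlgebra.contractLeft α (prExt K V ε)
        = prExt K V (CliffordAlgebra.contractLeft (vPairing K V ((0 : V), α)) ε) := by
    intro α
    have hε' := hε
    rw [pow_two] at hε'
    refine Submodule.mul_induction_on hε' ?_ ?_
    · rintro m ⟨u, hu, rfl⟩ n ⟨v, hv, rfl⟩
      rw [map_mul, prExt_ι, prExt_ι, contract_ι_mul_ι, contract_ι_mul_ι,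
        map_sub, map_smul, map_smul, prExt_ι, prExt_ι,
        vPairing_zero_fst, vPairing_zero_fst]
    · intro a c ha hc
      rw [map_add, map_add, map_add, ha, hc, map_add]
  -- prExt ε is of degree 2
  have hprε : prExt K V ε ∈ (⋀[K]^2 V) := by
    have hε' := hε
    rw [pow_two] at hε'
    show prExt K V ε ∈ LinearMap.range (ExteriorAlgebra.ι K (M := V)) ^ 2
    rw [pow_two]
    refine Submodule.mul_induction_on hε' ?_ ?_
    · rintro m ⟨u, hu, rfl⟩ n ⟨v, hv, rfl⟩
      rw [map_mul, prExt_ι, prExt_ι]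
      exact Submodule.mul_mem_mul ⟨u.1, rfl⟩ ⟨v.1, rfl⟩
    · intro a c ha hc
      rw [map_add]; exact add_mem ha hc
  -- all contractions of the difference vanish
  have hcontr0 : ∀ α : Module.Dual K V,
      CliffordAlgebra.contractLeft α (πε - (π + prExt K V ε)) = 0 := by
    intro α
    have hwsup : ((0 : V), α) ∈ E ⊔ F := by rw [hcompl.sup_eq_top]; trivial
    obtain ⟨e, he, f, hf, hw⟩ := Submodule.mem_sup.mp hwsup
    have hpw : p ((0 : V), α) = e := by
      rw [← hw, map_add, hpE e he, hpF f hf, add_zero]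
    have hpεw : pε ((0 : V), α) = e - (A f - f) := by
      have hsplit : e + f = (e - (A f - f)) + A f := by abel
      rw [← hw, hsplit, map_add, hpεE _ (sub_mem he (hN f)), hpεF (A f) ⟨f, hf, rfl⟩,
        add_zero]
    have hAw : A ((0 : V), α) - ((0 : V), α) = A f - f := by
      rw [← hw, map_add, hAE e he]
      abel
    have hvec : -(pε ((0 : V), α)) = -(p ((0 : V), α)) + (A ((0 : V), α) - ((0 : V), α)) := by
      rw [hpεw, hpw, hAw]
      abel
    have hgoal : ExteriorAlgebra.ι K (-(pε ((0 : V), α)).1)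
        = ExteriorAlgebra.ι K (-(p ((0 : V), α)).1)
          + ExteriorAlgebra.ι K ((A ((0 : V), α) - ((0 : V), α)).1) := by
      rw [← map_add]
      congr 1
      have h1 := congrArg Prod.fst hvec
      simpa using h1
    rw [map_sub, map_add, hπε α, hπ α, hL6 α, ← hA ((0 : V), α), prExt_ι, hgoal]
    abel
  have hδ : πε - (π + prExt K V ε) = 0 :=
    euler_two (Submodule.sub_mem _ hπεdeg (Submodule.add_mem _ hπdeg hprε)) hcontr0
  exact sub_eq_zero.mp hδ
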